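/- Let X be finite, ε > 0, α, β > 0, λ₀ > 0, and P₀, P₁ ∈ P_ε distinct with GJS(P₀,P₁,α) > λ₀. Define e_fix = inf{ D(Q‖P₁) + α·D(Q₀‖P₀) : Q, Q₀ ∈ P_ε, GJS(Q₀,Q,α) ≤ λ₀ } and κ = inf{ (1+β)·D(Q₁‖P₁) + α·D(Q₀‖P₀) : Q₀, Q₁ ∈ P_ε, GJS(Q₀,Q₁,α) ≤ λ₀ }. Then 0 < e_fix < κ. -/

import Mathlib

open scoped BigOperators

/-- KL divergence (base-2 logarithms) between finitely supported distributions. -/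
noncomputable def KL {X : Type*} [Fintype X] (P Q : X → ℝ) : ℝ :=
  ∑ x, P x * Real.logb 2 (P x / Q x)

/-- `P` is a probability distribution on the finite alphabet `X`. -/
def IsProb {X : Type*} [Fintype X] (P : X → ℝ) : Prop :=
  (∀ x, 0 ≤ P x) ∧ ∑ x, P x = 1

/-- The α-weighted generalized Jensen–Shannon divergence. -/
noncomputable def GJS {X : Type*} [Fintype X] (P Q : X → ℝ) (α : ℝ) : ℝ :=
  α * KL P (fun x => (α * P x + Q x) / (α + 1)) +
    KL Q (fun x => (α * P x + Q x) / (α + 1))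

open Real Filter Topology

section Aux

lemma log2pos : (0:ℝ) < Real.log 2 := Real.log_pos one_lt_two

lemma mul_log_div_ge {p q : ℝ} (hp : 0 < p) (hq : 0 < q) : p - q ≤ p * Real.log (p / q) := by
  have h := Real.log_le_sub_one_of_pos (div_pos hq hp)
  have e : p * (q / p) = q := by field_simp
  have hlog : Real.log (p/q) = -Real.log (q/p) := by rw [← Real.log_inv, inv_div]
  nlinarith [mul_le_mul_of_nonneg_left h hp.le]

lemma mul_log_div_gt {p q : ℝ} (hp : 0 < p) (hq : 0 < q) (hne : p ≠ q) :
    p - q < p * Real.log (p / q) := by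
  have hq1 : q / p ≠ 1 := by
    intro h1; rw [div_eq_one_iff_eq hp.ne'] at h1; exact hne h1.symm
  have h := Real.log_lt_sub_one_of_pos (div_pos hq hp) hq1
  have e : p * (q / p) = q := by field_simp
  have hlog : Real.log (p/q) = -Real.log (q/p) := by rw [← Real.log_inv, inv_div]
  nlinarith [mul_lt_mul_of_pos_left h hp]

lemma mul_logb_div_ge {p q : ℝ} (hp : 0 < p) (hq : 0 < q) :
    (p - q) / Real.log 2 ≤ p * Real.logb 2 (p / q) := by
  rw [Real.logb, ← mul_div_assoc]
  exact div_le_div_of_nonneg_right (mul_log_div_ge hp hq) log2pos.le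

lemma mul_logb_div_gt {p q : ℝ} (hp : 0 < p) (hq : 0 < q) (hne : p ≠ q) :
    (p - q) / Real.log 2 < p * Real.logb 2 (p / q) := by
  rw [Real.logb, ← mul_div_assoc]
  exact div_lt_div_of_pos_right (mul_log_div_gt hp hq hne) log2pos

/-- two point log-sum inequality -/
lemma logsum2 {a₁ a₂ b₁ b₂ : ℝ} (ha₁ : 0 < a₁) (ha₂ : 0 < a₂) (hb₁ : 0 < b₁) (hb₂ : 0 < b₂) :
    (a₁ + a₂) * Real.logb 2 ((a₁ + a₂) / (b₁ + b₂)) ≤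
      a₁ * Real.logb 2 (a₁ / b₁) + a₂ * Real.logb 2 (a₂ / b₂) := by
  have hs : 0 < a₁ + a₂ := by linarith
  have ht : 0 < b₁ + b₂ := by linarith
  have key : (a₁ + a₂) * Real.log ((a₁ + a₂) / (b₁ + b₂)) ≤
      a₁ * Real.log (a₁ / b₁) + a₂ * Real.log (a₂ / b₂) := by
    have h1 := mul_log_div_ge ha₁ (show (0:ℝ) < b₁*(a₁+a₂)/(b₁+b₂) by positivity)
    have h2 := mul_log_div_ge ha₂ (show (0:ℝ) < b₂*(a₁+a₂)/(b₁+b₂) by positivity)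
    have e1 : Real.log (a₁/(b₁*(a₁+a₂)/(b₁+b₂))) =
        Real.log (a₁/b₁) - Real.log ((a₁+a₂)/(b₁+b₂)) := by
      rw [Real.log_div ha₁.ne' (by positivity), Real.log_div ha₁.ne' hb₁.ne',
        Real.log_div hs.ne' ht.ne', Real.log_div (mul_pos hb₁ hs).ne' ht.ne',
        Real.log_mul hb₁.ne' hs.ne']
      ring
    have e2 : Real.log (a₂/(b₂*(a₁+a₂)/(b₁+b₂))) =
        Real.log (a₂/b₂) - Real.log ((a₁+a₂)/(b₁+b₂)) := by
      rw [Real.log_div ha₂.ne' (by positivity), Real.log_div ha₂.ne' hb₂.ne',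
        Real.log_div hs.ne' ht.ne', Real.log_div (mul_pos hb₂ hs).ne' ht.ne',
        Real.log_mul hb₂.ne' hs.ne']
      ring
    rw [e1] at h1; rw [e2] at h2
    have e3 : b₁*(a₁+a₂)/(b₁+b₂) + b₂*(a₁+a₂)/(b₁+b₂) = a₁+a₂ := by field_simp
    nlinarith [h1, h2, e3]
  calc (a₁ + a₂) * Real.logb 2 ((a₁ + a₂) / (b₁ + b₂))
      = ((a₁ + a₂) * Real.log ((a₁ + a₂) / (b₁ + b₂))) / Real.log 2 := by
        rw [Real.logb, mul_div_assoc]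
    _ ≤ (a₁ * Real.log (a₁ / b₁) + a₂ * Real.log (a₂ / b₂)) / Real.log 2 :=
        div_le_div_of_nonneg_right key log2pos.le
    _ = a₁ * Real.logb 2 (a₁ / b₁) + a₂ * Real.logb 2 (a₂ / b₂) := by
        rw [Real.logb, Real.logb]; ring

variable {X : Type*} [Fintype X]

lemma KL_nonneg {P Q : X → ℝ} (hP : ∀ x, 0 < P x) (hQ : ∀ x, 0 < Q x)
    (hPs : ∑ x, P x = 1) (hQs : ∑ x, Q x = 1) : 0 ≤ KL P Q := by
  have h : ∑ x, (P x - Q x) / Real.log 2 ≤ KL P Q :=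
    Finset.sum_le_sum fun x _ => mul_logb_div_ge (hP x) (hQ x)
  have e : ∑ x, (P x - Q x) / Real.log 2 = 0 := by
    rw [← Finset.sum_div, Finset.sum_sub_distrib, hPs, hQs]; simp
  linarith

lemma KL_pos {P Q : X → ℝ} (hP : ∀ x, 0 < P x) (hQ : ∀ x, 0 < Q x)
    (hPs : ∑ x, P x = 1) (hQs : ∑ x, Q x = 1) (hne : P ≠ Q) : 0 < KL P Q := by
  obtain ⟨y, hy⟩ := Function.ne_iff.mp hne
  have h : ∑ x, (P x - Q x) / Real.log 2 < KL P Q := by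
    apply Finset.sum_lt_sum (fun x _ => mul_logb_div_ge (hP x) (hQ x))
    exact ⟨y, Finset.mem_univ y, mul_logb_div_gt (hP y) (hQ y) hy⟩
  have e : ∑ x, (P x - Q x) / Real.log 2 = 0 := by
    rw [← Finset.sum_div, Finset.sum_sub_distrib, hPs, hQs]; simp
  linarith

lemma KL_self {P : X → ℝ} (hP : ∀ x, 0 < P x) : KL P P = 0 := by
  unfold KL
  apply Finset.sum_eq_zero
  intro x _
  rw [div_self (hP x).ne', Real.logb_one, mul_zero]

lemma GJS_self {α : ℝ} (hα : 0 < α) {P : X → ℝ} (hP : ∀ x, 0 < P x) : GJS P P α = 0 := by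
  have e : (fun x => (α * P x + P x) / (α + 1)) = P := by
    funext x; field_simp
  rw [GJS, e, KL_self hP, mul_zero, add_zero]

lemma f_convex {a b c d t : ℝ} (ha : 0 < a) (hb : 0 < b) (hc : 0 < c) (hd : 0 < d)
    (ht0 : 0 < t) (ht1 : t < 1) :
    ((1-t)*a + t*c) * Real.logb 2 (((1-t)*a + t*c) / ((1-t)*b + t*d)) ≤
      (1-t) * (a * Real.logb 2 (a / b)) + t * (c * Real.logb 2 (c / d)) := by
  have h1t : 0 < 1 - t := by linarith
  have := logsum2 (mul_pos h1t ha) (mul_pos ht0 hc) (mul_pos h1t hb) (mul_pos ht0 hd)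
  rw [mul_div_mul_left a b h1t.ne', mul_div_mul_left c d ht0.ne'] at this
  calc ((1-t)*a + t*c) * Real.logb 2 (((1-t)*a + t*c) / ((1-t)*b + t*d))
      ≤ (1-t)*a * Real.logb 2 (a / b) + t*c * Real.logb 2 (c / d) := this
    _ = (1-t) * (a * Real.logb 2 (a / b)) + t * (c * Real.logb 2 (c / d)) := by ring

lemma GJS_seg {α : ℝ} (hα : 0 < α) {A B C D : X → ℝ}
    (hA : ∀ x, 0 < A x) (hB : ∀ x, 0 < B x) (hC : ∀ x, 0 < C x) (hD : ∀ x, 0 < D x)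
    {t : ℝ} (ht0 : 0 < t) (ht1 : t < 1) :
    GJS (fun x => (1-t) * A x + t * C x) (fun x => (1-t) * B x + t * D x) α ≤
      (1-t) * GJS A B α + t * GJS C D α := by
  have hα1 : (0:ℝ) < α + 1 := by linarith
  have hm1 : ∀ x, 0 < (α * A x + B x) / (α+1) := fun x =>
    div_pos (add_pos (mul_pos hα (hA x)) (hB x)) hα1
  have hm2 : ∀ x, 0 < (α * C x + D x) / (α+1) := fun x =>
    div_pos (add_pos (mul_pos hα (hC x)) (hD x)) hα1
  have hmix : (fun x => (α * ((1-t) * A x + t * C x) + ((1-t) * B x + t * D x)) / (α + 1)) =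
      (fun x => (1-t) * ((α * A x + B x) / (α+1)) + t * ((α * C x + D x) / (α+1))) := by
    funext x; field_simp; ring
  have key1 : KL (fun x => (1-t) * A x + t * C x)
      (fun x => (1-t) * ((α * A x + B x) / (α+1)) + t * ((α * C x + D x) / (α+1))) ≤
      (1-t) * KL A (fun x => (α * A x + B x) / (α+1)) +
        t * KL C (fun x => (α * C x + D x) / (α+1)) := by
    unfold KL
    rw [Finset.mul_sum, Finset.mul_sum, ← Finset.sum_add_distrib]
    exact Finset.sum_le_sum fun x _ =>
      f_convex (hA x) (hm1 x) (hC x) (hm2 x) ht0 ht1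
  have key2 : KL (fun x => (1-t) * B x + t * D x)
      (fun x => (1-t) * ((α * A x + B x) / (α+1)) + t * ((α * C x + D x) / (α+1))) ≤
      (1-t) * KL B (fun x => (α * A x + B x) / (α+1)) +
        t * KL D (fun x => (α * C x + D x) / (α+1)) := by
    unfold KL
    rw [Finset.mul_sum, Finset.mul_sum, ← Finset.sum_add_distrib]
    exact Finset.sum_le_sum fun x _ =>
      f_convex (hB x) (hm1 x) (hD x) (hm2 x) ht0 ht1
  unfold GJS
  rw [hmix]
  nlinarith [mul_le_mul_of_nonneg_left key1 hα.le]

lemma KL_contAt {Y : Type*} [TopologicalSpace Y] {F G : Y → X → ℝ} {p : Y}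
    (hF : ∀ x, ContinuousAt (fun y => F y x) p) (hG : ∀ x, ContinuousAt (fun y => G y x) p)
    (hFpos : ∀ x, 0 < F p x) (hGpos : ∀ x, 0 < G p x) :
    ContinuousAt (fun y => KL (F y) (G y)) p := by
  have h : ∀ x ∈ Finset.univ, ContinuousAt (fun y => F y x * Real.logb 2 (F y x / G y x)) p := by
    intro x _
    have hdiv : ContinuousAt (fun y => F y x / G y x) p := (hF x).div (hG x) (hGpos x).ne'
    have hlogb : ContinuousAt (fun y => Real.logb 2 (F y x / G y x)) p :=
      ContinuousAt.comp (g := Real.logb 2) (f := fun y => F y x / G y x)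
        (Real.continuousAt_logb (div_pos (hFpos x) (hGpos x)).ne') hdiv
    exact (hF x).mul hlogb
  exact tendsto_finset_sum _ h

lemma GJS_contAt {Y : Type*} [TopologicalSpace Y] {α : ℝ} (hα : 0 < α)
    {F G : Y → X → ℝ} {p : Y}
    (hF : ∀ x, ContinuousAt (fun y => F y x) p) (hG : ∀ x, ContinuousAt (fun y => G y x) p)
    (hFpos : ∀ x, 0 < F p x) (hGpos : ∀ x, 0 < G p x) :
    ContinuousAt (fun y => GJS (F y) (G y) α) p := by
  have hM : ∀ x, ContinuousAt (fun y => (α * F y x + G y x) / (α + 1)) p := by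
    intro x
    exact (((hF x).const_mul α).add (hG x)).div_const _
  have hMpos : ∀ x, 0 < (α * F p x + G p x) / (α + 1) := fun x =>
    div_pos (add_pos (mul_pos hα (hFpos x)) (hGpos x)) (by linarith)
  have h1 : ContinuousAt (fun y => KL (F y) (fun x => (α * F y x + G y x) / (α + 1))) p :=
    KL_contAt hF hM hFpos hMpos
  have h2 : ContinuousAt (fun y => KL (G y) (fun x => (α * F y x + G y x) / (α + 1))) p :=
    KL_contAt hG hM hGpos hMpos
  exact (h1.const_mul α).add h2

/-- the feasible set -/
def Sset (X : Type*) [Fintype X] (ε α lam0 : ℝ) : Set ((X → ℝ) × (X → ℝ)) :=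
  {p | IsProb p.1 ∧ IsProb p.2 ∧ (∀ x, ε ≤ p.1 x) ∧ (∀ x, ε ≤ p.2 x) ∧
    GJS p.1 p.2 α ≤ lam0}

lemma Sset_isCompact {ε α lam0 : ℝ} (hε : 0 < ε) (hα : 0 < α) :
    IsCompact (Sset X ε α lam0) := by
  classical
  set lo : (X → ℝ) × (X → ℝ) := (fun _ => ε, fun _ => ε)
  set hi : (X → ℝ) × (X → ℝ) := (fun _ => 1, fun _ => 1)
  have hsub : Sset X ε α lam0 ⊆ Set.Icc lo hi := by
    rintro ⟨P, Q⟩ ⟨hP, hQ, hPε, hQε, _⟩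
    have hub : ∀ (R : X → ℝ), IsProb R → ∀ x, R x ≤ 1 := by
      intro R hR x
      rw [← hR.2]
      exact Finset.single_le_sum (fun i _ => hR.1 i) (Finset.mem_univ x)
    refine ⟨⟨fun x => hPε x, fun x => hQε x⟩, ⟨fun x => hub P hP x, fun x => hub Q hQ x⟩⟩
  have hC : IsClosed {p : (X → ℝ) × (X → ℝ) | IsProb p.1 ∧ IsProb p.2 ∧
      (∀ x, ε ≤ p.1 x) ∧ (∀ x, ε ≤ p.2 x)} := by
    have h1 : IsClosed {p : (X → ℝ) × (X → ℝ) | ∀ x, ε ≤ p.1 x} := by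
      have : {p : (X → ℝ) × (X → ℝ) | ∀ x, ε ≤ p.1 x} =
          ⋂ x, {p : (X → ℝ) × (X → ℝ) | ε ≤ p.1 x} := by ext p; simp
      rw [this]
      exact isClosed_iInter fun x =>
        isClosed_le continuous_const ((continuous_apply x).comp continuous_fst)
    have h2 : IsClosed {p : (X → ℝ) × (X → ℝ) | ∀ x, ε ≤ p.2 x} := by
      have : {p : (X → ℝ) × (X → ℝ) | ∀ x, ε ≤ p.2 x} =
          ⋂ x, {p : (X → ℝ) × (X → ℝ) | ε ≤ p.2 x} := by ext p; simp
      rw [this]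
      exact isClosed_iInter fun x =>
        isClosed_le continuous_const ((continuous_apply x).comp continuous_snd)
    have h3 : IsClosed {p : (X → ℝ) × (X → ℝ) | ∀ x, 0 ≤ p.1 x} := by
      have : {p : (X → ℝ) × (X → ℝ) | ∀ x, 0 ≤ p.1 x} =
          ⋂ x, {p : (X → ℝ) × (X → ℝ) | 0 ≤ p.1 x} := by ext p; simp
      rw [this]
      exact isClosed_iInter fun x =>
        isClosed_le continuous_const ((continuous_apply x).comp continuous_fst)
    have h4 : IsClosed {p : (X → ℝ) × (X → ℝ) | ∀ x, 0 ≤ p.2 x} := by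
      have : {p : (X → ℝ) × (X → ℝ) | ∀ x, 0 ≤ p.2 x} =
          ⋂ x, {p : (X → ℝ) × (X → ℝ) | 0 ≤ p.2 x} := by ext p; simp
      rw [this]
      exact isClosed_iInter fun x =>
        isClosed_le continuous_const ((continuous_apply x).comp continuous_snd)
    have h5 : IsClosed {p : (X → ℝ) × (X → ℝ) | ∑ x, p.1 x = 1} :=
      isClosed_eq (continuous_finset_sum _ fun x _ => (continuous_apply x).comp continuous_fst)
        continuous_const
    have h6 : IsClosed {p : (X → ℝ) × (X → ℝ) | ∑ x, p.2 x = 1} :=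
      isClosed_eq (continuous_finset_sum _ fun x _ => (continuous_apply x).comp continuous_snd)
        continuous_const
    have : {p : (X → ℝ) × (X → ℝ) | IsProb p.1 ∧ IsProb p.2 ∧
        (∀ x, ε ≤ p.1 x) ∧ (∀ x, ε ≤ p.2 x)} =
        ({p | ∀ x, 0 ≤ p.1 x} ∩ {p | ∑ x, p.1 x = 1}) ∩
        (({p | ∀ x, 0 ≤ p.2 x} ∩ {p | ∑ x, p.2 x = 1}) ∩
        ({p | ∀ x, ε ≤ p.1 x} ∩ {p | ∀ x, ε ≤ p.2 x})) := by
      ext p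
      simp only [Set.mem_setOf_eq, Set.mem_inter_iff, IsProb]
      try tauto
    rw [this]
    exact (h3.inter h5).inter ((h4.inter h6).inter (h1.inter h2))
  have hGJScont : ContinuousOn (fun p : (X → ℝ) × (X → ℝ) => GJS p.1 p.2 α)
      {p : (X → ℝ) × (X → ℝ) | IsProb p.1 ∧ IsProb p.2 ∧
        (∀ x, ε ≤ p.1 x) ∧ (∀ x, ε ≤ p.2 x)} := by
    intro p hp
    obtain ⟨_, _, hp1, hp2⟩ := hp
    exact (GJS_contAt hα
      (fun x => ((continuous_apply x).comp continuous_fst).continuousAt)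
      (fun x => ((continuous_apply x).comp continuous_snd).continuousAt)
      (fun x => lt_of_lt_of_le hε (hp1 x))
      (fun x => lt_of_lt_of_le hε (hp2 x))).continuousWithinAt
  have hSclosed : IsClosed (Sset X ε α lam0) := by
    have : Sset X ε α lam0 = {p : (X → ℝ) × (X → ℝ) | IsProb p.1 ∧ IsProb p.2 ∧
        (∀ x, ε ≤ p.1 x) ∧ (∀ x, ε ≤ p.2 x)} ∩
        (fun p : (X → ℝ) × (X → ℝ) => GJS p.1 p.2 α) ⁻¹' Set.Iic lam0 := by
      ext p
      simp only [Sset, Set.mem_setOf_eq, Set.mem_inter_iff, Set.mem_preimage, Set.mem_Iic]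
      try tauto
    rw [this]
    exact hGJScont.preimage_isClosed_of_isClosed hC isClosed_Iic
  exact (isCompact_Icc).of_isClosed_subset hSclosed hsub

lemma Sset_min {ε α lam0 : ℝ} (hε : 0 < ε) (hα : 0 < α)
    (hne : (Sset X ε α lam0).Nonempty) {P₀ P₁ : X → ℝ}
    (hP₀ε : ∀ x, ε ≤ P₀ x) (hP₁ε : ∀ x, ε ≤ P₁ x) (c : ℝ) :
    ∃ p ∈ Sset X ε α lam0, ∀ q ∈ Sset X ε α lam0,
      c * KL p.2 P₁ + α * KL p.1 P₀ ≤ c * KL q.2 P₁ + α * KL q.1 P₀ := by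
  have hcont : ContinuousOn
      (fun p : (X → ℝ) × (X → ℝ) => c * KL p.2 P₁ + α * KL p.1 P₀)
      (Sset X ε α lam0) := by
    intro p hp
    obtain ⟨_, hp2', hp1, hp2⟩ := hp
    have h1 : ContinuousAt (fun p : (X → ℝ) × (X → ℝ) => KL p.2 P₁) p :=
      KL_contAt (fun x => ((continuous_apply x).comp continuous_snd).continuousAt)
        (fun x => continuousAt_const)
        (fun x => lt_of_lt_of_le hε (hp2.1 x)) (fun x => lt_of_lt_of_le hε (hP₁ε x))
    have h2 : ContinuousAt (fun p : (X → ℝ) × (X → ℝ) => KL p.1 P₀) p :=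
      KL_contAt (fun x => ((continuous_apply x).comp continuous_fst).continuousAt)
        (fun x => continuousAt_const)
        (fun x => lt_of_lt_of_le hε (hp1 x)) (fun x => lt_of_lt_of_le hε (hP₀ε x))
    have h3 : ContinuousAt (fun p : (X → ℝ) × (X → ℝ) => c * KL p.2 P₁ + α * KL p.1 P₀) p :=
      (h1.const_mul c).add (h2.const_mul α)
    exact h3.continuousWithinAt
  obtain ⟨p, hpS, hmin⟩ := (Sset_isCompact hε hα).exists_isMinOn hne hcont
  exact ⟨p, hpS, fun q hq => hmin hq⟩

lemma term_hasDerivAt {c d e : ℝ} (hc : 0 < c) (he : 0 < e) :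
    HasDerivAt (fun t : ℝ => (c + t * d) * Real.logb 2 ((c + t * d) / e))
      (d * Real.logb 2 (c / e) + d / Real.log 2) 0 := by
  have h1 : HasDerivAt (fun t : ℝ => c + t * d) d 0 :=
    (hasDerivAt_mul_const d).const_add c
  have hdiv : HasDerivAt (fun t : ℝ => (c + t * d) / e) (d / e) 0 := h1.div_const e
  have hne : (c + 0 * d) / e ≠ 0 := by
    simp only [zero_mul, add_zero]
    exact (div_pos hc he).ne'
  have hlog : HasDerivAt (fun t : ℝ => Real.log ((c + t * d) / e))
      (((c + 0 * d) / e)⁻¹ * (d / e)) 0 := by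
    have := (Real.hasDerivAt_log hne).comp (0:ℝ) hdiv
    exact this
  have hlog' : HasDerivAt (fun t : ℝ => Real.log ((c + t * d) / e)) (d / c) 0 := by
    convert hlog using 1
    rw [zero_mul, add_zero, inv_div, div_mul_div_comm, mul_comm e d, mul_div_mul_right _ _ he.ne']
  have hmul : HasDerivAt (fun t : ℝ => (c + t * d) * Real.log ((c + t * d) / e))
      (d * Real.log (c / e) + (c + 0 * d) * (d / c)) 0 := by
    refine (h1.mul hlog').congr_deriv ?_
    simp
  have hfin := hmul.div_const (Real.log 2)
  have heq : (fun t : ℝ => (c + t * d) * Real.log ((c + t * d) / e) / Real.log 2) =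
      (fun t : ℝ => (c + t * d) * Real.logb 2 ((c + t * d) / e)) := by
    funext t; rw [Real.logb]; ring
  rw [heq] at hfin
  refine hfin.congr_deriv ?_
  rw [Real.logb, zero_mul, add_zero, mul_div_cancel₀ d hc.ne']
  ring

lemma exists_lt_of_deriv_neg {f : ℝ → ℝ} {D : ℝ} (hf : HasDerivAt f D 0) (hD : D < 0) :
    ∃ t : ℝ, 0 < t ∧ t < 1 ∧ f t < f 0 := by
  rw [hasDerivAt_iff_tendsto_slope] at hf
  have h1 : ∀ᶠ t in 𝓝[≠] (0:ℝ), slope f 0 t < 0 := hf.eventually_lt_const hD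
  have h2 : ∀ᶠ t in 𝓝[>] (0:ℝ), slope f 0 t < 0 :=
    h1.filter_mono (nhdsWithin_mono 0 fun t ht => ne_of_gt ht)
  have h3 : ∀ᶠ t in 𝓝[>] (0:ℝ), t < 1 :=
    eventually_nhdsWithin_of_eventually_nhds (eventually_lt_nhds zero_lt_one)
  obtain ⟨t, hslope, ht1, ht0⟩ := (h2.and (h3.and self_mem_nhdsWithin)).exists
  refine ⟨t, ht0, ht1, ?_⟩
  rw [slope_def_field] at hslope
  have : (f t - f 0) / (t - 0) < 0 := hslope
  rw [sub_zero] at this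
  rcases div_neg_iff.mp this with ⟨h, _⟩ | ⟨h, ht⟩
  · linarith
  · linarith

end Aux

set_option maxHeartbeats 2000000 in
/-- If `GJS(P₀,P₁,α) > lam0`, then `0 < e_fix < κ`. -/
theorem stmt11 {X : Type*} [Fintype X] (ε α β lam0 : ℝ)
    (hε : 0 < ε) (hα : 0 < α) (hβ : 0 < β) (hlam : 0 < lam0)
    (P₀ P₁ : X → ℝ) (hP₀ : IsProb P₀) (hP₁ : IsProb P₁)
    (hP₀ε : ∀ x, ε ≤ P₀ x) (hP₁ε : ∀ x, ε ≤ P₁ x) (hne : P₀ ≠ P₁)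
    (hGJS : lam0 < GJS P₀ P₁ α) :
    0 < sInf {v | ∃ Q Q₀ : X → ℝ, IsProb Q ∧ IsProb Q₀ ∧
          (∀ x, ε ≤ Q x) ∧ (∀ x, ε ≤ Q₀ x) ∧ GJS Q₀ Q α ≤ lam0 ∧
          v = KL Q P₁ + α * KL Q₀ P₀} ∧
    sInf {v | ∃ Q Q₀ : X → ℝ, IsProb Q ∧ IsProb Q₀ ∧
          (∀ x, ε ≤ Q x) ∧ (∀ x, ε ≤ Q₀ x) ∧ GJS Q₀ Q α ≤ lam0 ∧
          v = KL Q P₁ + α * KL Q₀ P₀}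
      < sInf {v | ∃ Q₀ Q₁ : X → ℝ, IsProb Q₀ ∧ IsProb Q₁ ∧
          (∀ x, ε ≤ Q₀ x) ∧ (∀ x, ε ≤ Q₁ x) ∧ GJS Q₀ Q₁ α ≤ lam0 ∧
          v = (1+β) * KL Q₁ P₁ + α * KL Q₀ P₀} := by
  classical
  have hP₀pos : ∀ x, 0 < P₀ x := fun x => lt_of_lt_of_le hε (hP₀ε x)
  have hP₁pos : ∀ x, 0 < P₁ x := fun x => lt_of_lt_of_le hε (hP₁ε x)
  -- the feasible set is nonempty
  have hSne : (Sset X ε α lam0).Nonempty :=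
    ⟨(P₁, P₁), hP₁, hP₁, hP₁ε, hP₁ε, by rw [GJS_self hα hP₁pos]; exact hlam.le⟩
  -- identify the two value sets as images
  have hVe : {v | ∃ Q Q₀ : X → ℝ, IsProb Q ∧ IsProb Q₀ ∧
          (∀ x, ε ≤ Q x) ∧ (∀ x, ε ≤ Q₀ x) ∧ GJS Q₀ Q α ≤ lam0 ∧
          v = KL Q P₁ + α * KL Q₀ P₀} =
      (fun p : (X → ℝ) × (X → ℝ) => KL p.2 P₁ + α * KL p.1 P₀) '' Sset X ε α lam0 := by
    ext v
    constructor
    · rintro ⟨Q, Q₀, h1, h2, h3, h4, h5, h6⟩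
      exact ⟨(Q₀, Q), ⟨h2, h1, h4, h3, h5⟩, h6.symm⟩
    · rintro ⟨⟨Q₀, Q⟩, ⟨h2, h1, h4, h3, h5⟩, h6⟩
      exact ⟨Q, Q₀, h1, h2, h3, h4, h5, h6.symm⟩
  have hVk : {v | ∃ Q₀ Q₁ : X → ℝ, IsProb Q₀ ∧ IsProb Q₁ ∧
          (∀ x, ε ≤ Q₀ x) ∧ (∀ x, ε ≤ Q₁ x) ∧ GJS Q₀ Q₁ α ≤ lam0 ∧
          v = (1+β) * KL Q₁ P₁ + α * KL Q₀ P₀} =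
      (fun p : (X → ℝ) × (X → ℝ) => (1+β) * KL p.2 P₁ + α * KL p.1 P₀) '' Sset X ε α lam0 := by
    ext v
    constructor
    · rintro ⟨Q₀, Q₁, h1, h2, h3, h4, h5, h6⟩
      exact ⟨(Q₀, Q₁), ⟨h1, h2, h3, h4, h5⟩, h6.symm⟩
    · rintro ⟨⟨Q₀, Q₁⟩, ⟨h1, h2, h3, h4, h5⟩, h6⟩
      exact ⟨Q₀, Q₁, h1, h2, h3, h4, h5, h6.symm⟩
  -- minimizers
  obtain ⟨pe, hpeS, hminE'⟩ := Sset_min hε hα hSne hP₀ε hP₁ε 1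
  obtain ⟨pk, hpkS, hminK⟩ := Sset_min hε hα hSne hP₀ε hP₁ε (1+β)
  have hminE : ∀ q ∈ Sset X ε α lam0,
      KL pe.2 P₁ + α * KL pe.1 P₀ ≤ KL q.2 P₁ + α * KL q.1 P₀ := by
    intro q hq
    have := hminE' q hq
    linarith
  set e : ℝ := KL pe.2 P₁ + α * KL pe.1 P₀ with he_def
  set k : ℝ := (1+β) * KL pk.2 P₁ + α * KL pk.1 P₀ with hk_def
  obtain ⟨hpe1, hpe2, hpe1ε, hpe2ε, hpeG⟩ := hpeS
  obtain ⟨hpk1, hpk2, hpk1ε, hpk2ε, hpkG⟩ := hpkS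
  have hpe1pos : ∀ x, 0 < pe.1 x := fun x => lt_of_lt_of_le hε (hpe1ε x)
  have hpe2pos : ∀ x, 0 < pe.2 x := fun x => lt_of_lt_of_le hε (hpe2ε x)
  have hpk1pos : ∀ x, 0 < pk.1 x := fun x => lt_of_lt_of_le hε (hpk1ε x)
  have hpk2pos : ∀ x, 0 < pk.2 x := fun x => lt_of_lt_of_le hε (hpk2ε x)
  have hpeS' : pe ∈ Sset X ε α lam0 := ⟨hpe1, hpe2, hpe1ε, hpe2ε, hpeG⟩
  have hpkS' : pk ∈ Sset X ε α lam0 := ⟨hpk1, hpk2, hpk1ε, hpk2ε, hpkG⟩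
  -- sInf of the e-set equals e
  have hsInfE : sInf ((fun p : (X → ℝ) × (X → ℝ) =>
      KL p.2 P₁ + α * KL p.1 P₀) '' Sset X ε α lam0) = e := by
    apply le_antisymm
    · exact csInf_le ⟨e, by rintro v ⟨q, hq, rfl⟩; exact hminE q hq⟩ ⟨pe, hpeS', rfl⟩
    · exact le_csInf ⟨e, pe, hpeS', rfl⟩ (by rintro v ⟨q, hq, rfl⟩; exact hminE q hq)
  have hminK' : ∀ q ∈ Sset X ε α lam0,
      k ≤ (1+β) * KL q.2 P₁ + α * KL q.1 P₀ := fun q hq => hminK q hq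
  have hsInfK : sInf ((fun p : (X → ℝ) × (X → ℝ) =>
      (1+β) * KL p.2 P₁ + α * KL p.1 P₀) '' Sset X ε α lam0) = k := by
    apply le_antisymm
    · exact csInf_le ⟨k, by rintro v ⟨q, hq, rfl⟩; exact hminK' q hq⟩ ⟨pk, hpkS', rfl⟩
    · exact le_csInf ⟨k, pk, hpkS', rfl⟩ (by rintro v ⟨q, hq, rfl⟩; exact hminK' q hq)
  rw [hVe, hVk, hsInfE, hsInfK]
  -- nonnegativity facts
  have hKLe2 : 0 ≤ KL pe.2 P₁ := KL_nonneg hpe2pos hP₁pos hpe2.2 hP₁.2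
  have hKLe1 : 0 ≤ KL pe.1 P₀ := KL_nonneg hpe1pos hP₀pos hpe1.2 hP₀.2
  have hKLk2 : 0 ≤ KL pk.2 P₁ := KL_nonneg hpk2pos hP₁pos hpk2.2 hP₁.2
  have hKLk1 : 0 ≤ KL pk.1 P₀ := KL_nonneg hpk1pos hP₀pos hpk1.2 hP₀.2
  constructor
  · -- 0 < e
    by_cases hA : pe.1 = P₀
    · have hB : pe.2 ≠ P₁ := by
        intro hB
        rw [hA, hB] at hpeG
        exact absurd hpeG (not_le.mpr hGJS)
      have := KL_pos hpe2pos hP₁pos hpe2.2 hP₁.2 hB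
      have := mul_nonneg hα.le hKLe1
      rw [he_def]
      linarith
    · have := KL_pos hpe1pos hP₀pos hpe1.2 hP₀.2 hA
      have := mul_pos hα this
      rw [he_def]
      linarith
  · -- e < k
    by_cases hcase : pk.2 = P₁
    · -- the harder case : perturbation argument
      have hKL2zero : KL pk.2 P₁ = 0 := by rw [hcase]; exact KL_self hP₁pos
      have hk_eq : k = α * KL pk.1 P₀ := by rw [hk_def, hKL2zero]; ring
      have hAne : pk.1 ≠ P₀ := by
        intro h
        rw [h, hcase] at hpkG
        exact absurd hpkG (not_le.mpr hGJS)
      -- derivative of the perturbed objective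
      set A := pk.1 with hA_def
      have hApos : ∀ x, 0 < A x := hpk1pos
      have hd1 : HasDerivAt (fun t : ℝ => ∑ x, (P₁ x + t * (P₀ x - P₁ x)) *
            Real.logb 2 ((P₁ x + t * (P₀ x - P₁ x)) / P₁ x))
          (∑ x, ((P₀ x - P₁ x) * Real.logb 2 (P₁ x / P₁ x) + (P₀ x - P₁ x) / Real.log 2)) 0 :=
        HasDerivAt.fun_sum fun x _ => term_hasDerivAt (hP₁pos x) (hP₁pos x)
      have hd2 : HasDerivAt (fun t : ℝ => ∑ x, (A x + t * (P₀ x - A x)) *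
            Real.logb 2 ((A x + t * (P₀ x - A x)) / P₀ x))
          (∑ x, ((P₀ x - A x) * Real.logb 2 (A x / P₀ x) + (P₀ x - A x) / Real.log 2)) 0 :=
        HasDerivAt.fun_sum fun x _ => term_hasDerivAt (hApos x) (hP₀pos x)
      have hd : HasDerivAt (fun t : ℝ =>
          KL (fun x => P₁ x + t * (P₀ x - P₁ x)) P₁ +
            α * KL (fun x => A x + t * (P₀ x - A x)) P₀)
          ((∑ x, ((P₀ x - P₁ x) * Real.logb 2 (P₁ x / P₁ x) + (P₀ x - P₁ x) / Real.log 2)) +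
            α * (∑ x, ((P₀ x - A x) * Real.logb 2 (A x / P₀ x) + (P₀ x - A x) / Real.log 2))) 0 :=
        hd1.add (hd2.const_mul α)
      -- the derivative is negative
      have hD1 : (∑ x, ((P₀ x - P₁ x) * Real.logb 2 (P₁ x / P₁ x) +
          (P₀ x - P₁ x) / Real.log 2)) = 0 := by
        have : ∀ x, (P₀ x - P₁ x) * Real.logb 2 (P₁ x / P₁ x) +
            (P₀ x - P₁ x) / Real.log 2 = (P₀ x - P₁ x) / Real.log 2 := by
          intro x
          rw [div_self (hP₁pos x).ne', Real.logb_one, mul_zero, zero_add]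
        simp only [this]
        rw [← Finset.sum_div, Finset.sum_sub_distrib, hP₀.2, hP₁.2]
        simp
      have hsumA : ∑ x, (P₀ x - A x) / Real.log 2 = 0 := by
        rw [← Finset.sum_div, Finset.sum_sub_distrib, hP₀.2, hpk1.2]
        simp
      have hD2 : (∑ x, ((P₀ x - A x) * Real.logb 2 (A x / P₀ x) +
          (P₀ x - A x) / Real.log 2)) < 0 := by
        rw [Finset.sum_add_distrib, hsumA, add_zero]
        have hle : ∀ x ∈ Finset.univ, (P₀ x - A x) * Real.logb 2 (A x / P₀ x) ≤ (0:ℝ) := by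
          intro x _
          rcases le_or_gt (A x) (P₀ x) with h | h
          · apply mul_nonpos_of_nonneg_of_nonpos (by linarith)
            apply Real.logb_nonpos one_lt_two (div_nonneg (hApos x).le (hP₀pos x).le)
            rw [div_le_one (hP₀pos x)]
            exact h
          · apply mul_nonpos_of_nonpos_of_nonneg (by linarith)
            apply Real.logb_nonneg one_lt_two
            rw [le_div_iff₀ (hP₀pos x), one_mul]
            exact h.le
        obtain ⟨y, hy⟩ := Function.ne_iff.mp hAne
        have hstrict : (P₀ y - A y) * Real.logb 2 (A y / P₀ y) < 0 := by
          rcases lt_or_gt_of_ne hy with h | h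
          · apply mul_neg_of_pos_of_neg (by linarith)
            apply Real.logb_neg one_lt_two (div_pos (hApos y) (hP₀pos y))
            rw [div_lt_one (hP₀pos y)]
            exact h
          · apply mul_neg_of_neg_of_pos (by linarith)
            apply Real.logb_pos one_lt_two
            rw [lt_div_iff₀ (hP₀pos y), one_mul]
            exact h
        calc ∑ x, (P₀ x - A x) * Real.logb 2 (A x / P₀ x)
            < ∑ _x : X, (0:ℝ) :=
              Finset.sum_lt_sum hle ⟨y, Finset.mem_univ y, hstrict⟩
          _ = 0 := by simp
      have hDneg : (∑ x, ((P₀ x - P₁ x) * Real.logb 2 (P₁ x / P₁ x) +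
          (P₀ x - P₁ x) / Real.log 2)) +
          α * (∑ x, ((P₀ x - A x) * Real.logb 2 (A x / P₀ x) +
            (P₀ x - A x) / Real.log 2)) < 0 := by
        rw [hD1, zero_add]
        exact mul_neg_of_pos_of_neg hα hD2
      obtain ⟨t, ht0, ht1, hft⟩ := exists_lt_of_deriv_neg hd hDneg
      -- the perturbed point is feasible
      set At : X → ℝ := fun x => (1-t) * A x + t * P₀ x with hAt_def
      set Qt : X → ℝ := fun x => (1-t) * P₁ x + t * P₀ x with hQt_def
      have hAt_eq : (fun x => A x + t * (P₀ x - A x)) = At := by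
        funext x; rw [hAt_def]; ring
      have hQt_eq : (fun x => P₁ x + t * (P₀ x - P₁ x)) = Qt := by
        funext x; rw [hQt_def]; ring
      have hAtε : ∀ x, ε ≤ At x := by
        intro x
        have h1 := hpk1ε x
        have h2 := hP₀ε x
        rw [hAt_def]; dsimp only
        nlinarith
      have hQtε : ∀ x, ε ≤ Qt x := by
        intro x
        have h1 := hP₁ε x
        have h2 := hP₀ε x
        rw [hQt_def]; dsimp only
        nlinarith
      have hAtProb : IsProb At := by
        constructor
        · intro x; exact le_trans hε.le (hAtε x)
        · rw [hAt_def]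
          rw [Finset.sum_add_distrib, ← Finset.mul_sum, ← Finset.mul_sum, hpk1.2, hP₀.2]
          ring
      have hQtProb : IsProb Qt := by
        constructor
        · intro x; exact le_trans hε.le (hQtε x)
        · rw [hQt_def]
          rw [Finset.sum_add_distrib, ← Finset.mul_sum, ← Finset.mul_sum, hP₁.2, hP₀.2]
          ring
      have hGJSt : GJS At Qt α ≤ lam0 := by
        have hseg := GJS_seg hα hApos hP₁pos hP₀pos hP₀pos ht0 ht1
        have hG0 : GJS P₀ P₀ α = 0 := GJS_self hα hP₀pos
        have hGA : GJS A P₁ α ≤ lam0 := by rw [← hcase]; exact hpkG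
        have hGAnn : 0 ≤ GJS A P₁ α := by
          have hα1 : (0:ℝ) < α + 1 := by linarith
          have hm : ∀ x, 0 < (α * A x + P₁ x) / (α+1) := fun x =>
            div_pos (add_pos (mul_pos hα (hApos x)) (hP₁pos x)) hα1
          have hmsum : ∑ x, (α * A x + P₁ x) / (α+1) = 1 := by
            rw [← Finset.sum_div, Finset.sum_add_distrib, ← Finset.mul_sum, hpk1.2, hP₁.2]
            field_simp
          have n1 := KL_nonneg hApos hm hpk1.2 hmsum
          have n2 := KL_nonneg hP₁pos hm hP₁.2 hmsum
          rw [GJS]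
          have := mul_nonneg hα.le n1
          linarith
        calc GJS At Qt α ≤ (1-t) * GJS A P₁ α + t * GJS P₀ P₀ α := hseg
          _ = (1-t) * GJS A P₁ α := by rw [hG0]; ring
          _ ≤ (1-t) * lam0 := by nlinarith
          _ ≤ lam0 := by nlinarith
      have hmem : ((At, Qt) : (X → ℝ) × (X → ℝ)) ∈ Sset X ε α lam0 :=
        ⟨hAtProb, hQtProb, hAtε, hQtε, hGJSt⟩
      -- conclude
      have hle_ft : e ≤ KL Qt P₁ + α * KL At P₀ := hminE (At, Qt) hmem
      have hf0 : (fun t : ℝ =>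
          KL (fun x => P₁ x + t * (P₀ x - P₁ x)) P₁ +
            α * KL (fun x => A x + t * (P₀ x - A x)) P₀) 0 = k := by
        have e1 : (fun x => P₁ x + (0:ℝ) * (P₀ x - P₁ x)) = P₁ := by funext x; ring
        have e2 : (fun x => A x + (0:ℝ) * (P₀ x - A x)) = A := by funext x; ring
        simp only [e1, e2]
        rw [KL_self hP₁pos, hk_eq]
        ring
      have hft' : (fun t : ℝ =>
          KL (fun x => P₁ x + t * (P₀ x - P₁ x)) P₁ +
            α * KL (fun x => A x + t * (P₀ x - A x)) P₀) t =
          KL Qt P₁ + α * KL At P₀ := by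
        simp only [hAt_eq, hQt_eq]
      have hf0' : KL (fun x => P₁ x + 0 * (P₀ x - P₁ x)) P₁ +
          α * KL (fun x => A x + 0 * (P₀ x - A x)) P₀ = k := hf0
      have hftQ : KL (fun x => P₁ x + t * (P₀ x - P₁ x)) P₁ +
          α * KL (fun x => A x + t * (P₀ x - A x)) P₀ =
          KL Qt P₁ + α * KL At P₀ := hft'
      rw [hf0', hftQ] at hft
      exact lt_of_le_of_lt hle_ft hft
    · -- easy case : the KL term at the κ-minimizer is strictly positive
      have hKLpos : 0 < KL pk.2 P₁ := KL_pos hpk2pos hP₁pos hpk2.2 hP₁.2 hcase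
      have h1 : e ≤ KL pk.2 P₁ + α * KL pk.1 P₀ := hminE pk hpkS'
      rw [hk_def]
      nlinarith
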